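/- Let L, M, N be positive integers and let g_0, …, g_{L−1} ∈ ℓ²(ℤ²,ℍ). If the Gabor system G(g,L,M,N) is a Parseval frame for ℓ²(ℤ²,ℍ), then N² ≤ L·M². -/

import Mathlib

noncomputable section

open scoped Real

/-- The real quaternions. -/
abbrev ℍ : Type := Quaternion ℝ

/-- `e_i θ = cos θ + (sin θ) i`. -/
def eI (θ : ℝ) : ℍ := ⟨Real.cos θ, Real.sin θ, 0, 0⟩

/-- `e_j θ = cos θ + (sin θ) j`. -/
def eJ (θ : ℝ) : ℍ := ⟨Real.cos θ, 0, Real.sin θ, 0⟩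

/-- Quaternionic pairing `⟨f,g⟩ = ∑ conj (f k) * g k`. -/
def qpair (f g : ℤ × ℤ → ℍ) : ℍ := ∑' k : ℤ × ℤ, star (f k) * g k

/-- Membership in `ℓ²(ℤ², ℍ)`. -/
def MemL2 (f : ℤ × ℤ → ℍ) : Prop := Summable fun k : ℤ × ℤ => ‖f k‖ ^ 2

/-- `‖f‖² = ∑ |f k|²`. -/
def normSq2 (f : ℤ × ℤ → ℍ) : ℝ := ∑' k : ℤ × ℤ, ‖f k‖ ^ 2

/-- A window is real-valued if all its values lie in `ℝ ⊆ ℍ`. -/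
def IsRealValued (f : ℤ × ℤ → ℍ) : Prop := ∀ k : ℤ × ℤ, f k = ((f k).re : ℍ)

/-- The Gabor atom `E_{m/M} T_{nN} w`. -/
def gaborAtom (M N : ℕ) (w : ℤ × ℤ → ℍ) (m : ℕ × ℕ) (n : ℤ × ℤ) : ℤ × ℤ → ℍ :=
  fun k =>
    eI (2 * π * (m.1 : ℝ) * (k.1 : ℝ) / (M : ℝ)) *
      w (k.1 - n.1 * (N : ℤ), k.2 - n.2 * (N : ℤ)) *
      eJ (2 * π * (m.2 : ℝ) * (k.2 : ℝ) / (M : ℝ))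

/-- The index square `{0, …, M-1}²`. -/
abbrev msq (M : ℕ) : Finset (ℕ × ℕ) := Finset.range M ×ˢ Finset.range M

/-- `k ∈ {0, …, N-1}²` inside `ℤ²`. -/
def InNsq (N : ℕ) (k : ℤ × ℤ) : Prop :=
  0 ≤ k.1 ∧ k.1 < (N : ℤ) ∧ 0 ≤ k.2 ∧ k.2 < (N : ℤ)

/-- `∑_{l<L} ∑_{n∈ℤ²} ∑_{m∈{0,…,M-1}²} |⟨E_{m/M}T_{nN}g_l, h⟩|²`. -/
def frameSum (L M N : ℕ) (g : ℕ → ℤ × ℤ → ℍ) (h : ℤ × ℤ → ℍ) : ℝ :=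
  ∑ l ∈ Finset.range L, ∑' n : ℤ × ℤ, ∑ m ∈ msq M,
    ‖qpair (gaborAtom M N (g l) m n) h‖ ^ 2

/-- Bessel system with bound `B`. -/
def IsBessel (L M N : ℕ) (g : ℕ → ℤ × ℤ → ℍ) (B : ℝ) : Prop :=
  ∀ h : ℤ × ℤ → ℍ, MemL2 h → frameSum L M N g h ≤ B * normSq2 h

/-- Frame with bounds `A ≤ B`. -/
def IsFrame (L M N : ℕ) (g : ℕ → ℤ × ℤ → ℍ) (A B : ℝ) : Prop :=
  ∀ h : ℤ × ℤ → ℍ, MemL2 h →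
    A * normSq2 h ≤ frameSum L M N g h ∧ frameSum L M N g h ≤ B * normSq2 h

/-- Parseval frame. -/
def IsParseval (L M N : ℕ) (g : ℕ → ℤ × ℤ → ℍ) : Prop :=
  ∀ h : ℤ × ℤ → ℍ, MemL2 h → frameSum L M N g h = normSq2 h

/-- Orthonormal system. -/
def IsON (L M N : ℕ) (g : ℕ → ℤ × ℤ → ℍ) : Prop :=
  ∀ l l' : ℕ, l < L → l' < L → ∀ m ∈ msq M, ∀ m' ∈ msq M, ∀ n n' : ℤ × ℤ,
    qpair (gaborAtom M N (g l) m n) (gaborAtom M N (g l') m' n') =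
      if l = l' ∧ m = m' ∧ n = n' then 1 else 0

/-- `G(k,p) = ∑_{l<L} ∑_{n∈ℤ²} g_l(k-nN) g_l(k+pM-nN)`. -/
def gaborG (L M N : ℕ) (g : ℕ → ℤ × ℤ → ℍ) (k p : ℤ × ℤ) : ℍ :=
  ∑ l ∈ Finset.range L, ∑' n : ℤ × ℤ,
    g l (k.1 - n.1 * (N : ℤ), k.2 - n.2 * (N : ℤ)) *
      g l (k.1 + p.1 * (M : ℤ) - n.1 * (N : ℤ), k.2 + p.2 * (M : ℤ) - n.2 * (N : ℤ))

/-- Mixed version: `∑_{l<L} ∑_{n∈ℤ²} g_l(k-nN) h_l(k+pM-nN)`. -/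
def gaborGmix (L M N : ℕ) (g h : ℕ → ℤ × ℤ → ℍ) (k p : ℤ × ℤ) : ℍ :=
  ∑ l ∈ Finset.range L, ∑' n : ℤ × ℤ,
    g l (k.1 - n.1 * (N : ℤ), k.2 - n.2 * (N : ℤ)) *
      h l (k.1 + p.1 * (M : ℤ) - n.1 * (N : ℤ), k.2 + p.2 * (M : ℤ) - n.2 * (N : ℤ))

/-- `∑_{l<L} ∑_{n∈ℤ²} |g_l(k-nN)|²`. -/
def winSum (L N : ℕ) (g : ℕ → ℤ × ℤ → ℍ) (k : ℤ × ℤ) : ℝ :=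
  ∑ l ∈ Finset.range L, ∑' n : ℤ × ℤ,
    ‖g l (k.1 - n.1 * (N : ℤ), k.2 - n.2 * (N : ℤ))‖ ^ 2

/-- Support of diameter `< M` in every row and every column. -/
def DiamLt (M : ℕ) (f : ℤ × ℤ → ℍ) : Prop :=
  (∀ k₂ k₁ k₁' : ℤ, f (k₁, k₂) ≠ 0 → f (k₁', k₂) ≠ 0 → |k₁ - k₁'| < (M : ℤ)) ∧
  (∀ k₁ k₂ k₂' : ℤ, f (k₁, k₂) ≠ 0 → f (k₁, k₂') ≠ 0 → |k₂ - k₂'| < (M : ℤ))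

/-- `M`-periodicity. -/
def MPeriodic (M : ℕ) (f : ℤ × ℤ → ℍ) : Prop :=
  ∀ k : ℤ × ℤ, f (k.1 + (M : ℤ), k.2) = f k ∧ f (k.1, k.2 + (M : ℤ)) = f k

/-- Duality of two Gabor systems (on finitely supported sequences). -/
def AreDual (L M N : ℕ) (g h : ℕ → ℤ × ℤ → ℍ) : Prop :=
  ∀ f φ : ℤ × ℤ → ℍ, (Function.support f).Finite → (Function.support φ).Finite →
    (∑ l ∈ Finset.range L, ∑' n : ℤ × ℤ, ∑ m ∈ msq M,
      qpair f (gaborAtom M N (g l) m n) * qpair (gaborAtom M N (h l) m n) φ)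
      = qpair f φ


lemma norm_eI (θ : ℝ) : ‖eI θ‖ = 1 := by
  have h : ‖eI θ‖ * ‖eI θ‖ = 1 := by
    rw [← Quaternion.normSq_eq_norm_mul_self, Quaternion.normSq_def']
    simp [eI]
  nlinarith [norm_nonneg (eI θ)]

lemma norm_eJ (θ : ℝ) : ‖eJ θ‖ = 1 := by
  have h : ‖eJ θ‖ * ‖eJ θ‖ = 1 := by
    rw [← Quaternion.normSq_eq_norm_mul_self, Quaternion.normSq_def']
    simp [eJ]
  nlinarith [norm_nonneg (eJ θ)]

lemma norm_gaborAtom (M N : ℕ) (w : ℤ × ℤ → ℍ) (m : ℕ × ℕ) (n k : ℤ × ℤ) :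
    ‖gaborAtom M N w m n k‖ = ‖w (k.1 - n.1 * (N : ℤ), k.2 - n.2 * (N : ℤ))‖ := by
  unfold gaborAtom
  rw [norm_mul, norm_mul, norm_eI, norm_eJ]
  ring

/-- delta function -/
def qdelta (κ : ℤ × ℤ) : ℤ × ℤ → ℍ := fun k => if k = κ then 1 else 0

lemma memL2_qdelta (κ : ℤ × ℤ) : MemL2 (qdelta κ) := by
  apply summable_of_ne_finset_zero (s := {κ})
  intro b hb
  simp only [Finset.mem_singleton] at hb
  simp [qdelta, hb]

lemma normSq2_qdelta (κ : ℤ × ℤ) : normSq2 (qdelta κ) = 1 := by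
  unfold normSq2
  rw [tsum_eq_single κ]
  · simp [qdelta]
  · intro b hb; simp [qdelta, hb]

lemma qpair_qdelta (f : ℤ × ℤ → ℍ) (κ : ℤ × ℤ) : qpair f (qdelta κ) = star (f κ) := by
  unfold qpair
  rw [tsum_eq_single κ]
  · simp [qdelta]
  · intro b hb; simp [qdelta, hb]

lemma summable_shift (N : ℕ) (hN : 0 < N) (w : ℤ × ℤ → ℍ) (hw : MemL2 w) (κ : ℤ × ℤ) :
    Summable fun n : ℤ × ℤ => ‖w (κ.1 - n.1 * (N : ℤ), κ.2 - n.2 * (N : ℤ))‖ ^ 2 := by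
  have hNi : (N : ℤ) ≠ 0 := by exact_mod_cast hN.ne'
  have : Function.Injective (fun n : ℤ × ℤ => (κ.1 - n.1 * (N : ℤ), κ.2 - n.2 * (N : ℤ))) := by
    intro a b hab
    simp only [Prod.mk.injEq] at hab
    have h1 : a.1 * (N : ℤ) = b.1 * (N : ℤ) := by omega
    have h2 : a.2 * (N : ℤ) = b.2 * (N : ℤ) := by omega
    exact Prod.ext (mul_right_cancel₀ hNi h1) (mul_right_cancel₀ hNi h2)
  exact hw.comp_injective this

lemma frameSum_qdelta (L M N : ℕ) (g : ℕ → ℤ × ℤ → ℍ) (κ : ℤ × ℤ) :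
    frameSum L M N g (qdelta κ) =
      ((M : ℝ) * M) * ∑ l ∈ Finset.range L, ∑' n : ℤ × ℤ,
        ‖g l (κ.1 - n.1 * (N : ℤ), κ.2 - n.2 * (N : ℤ))‖ ^ 2 := by
  unfold frameSum
  rw [Finset.mul_sum]
  refine Finset.sum_congr rfl fun l _ => ?_
  rw [← tsum_mul_left]
  congr 1; funext n
  have : ∀ m ∈ msq M, ‖qpair (gaborAtom M N (g l) m n) (qdelta κ)‖ ^ 2
      = ‖g l (κ.1 - n.1 * (N : ℤ), κ.2 - n.2 * (N : ℤ))‖ ^ 2 := by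
    intro m _
    rw [qpair_qdelta, norm_star, norm_gaborAtom]
  rw [Finset.sum_congr rfl this, Finset.sum_const]
  simp [msq, mul_comm]

/-- division with remainder as an equivalence -/
def finIntEquiv (N : ℕ) (hN : 0 < N) : Fin N × ℤ ≃ ℤ where
  toFun p := (p.1 : ℤ) - p.2 * N
  invFun j := (⟨(j % (N : ℤ)).toNat, by
      have h0 : ((N:ℕ) : ℤ) ≠ 0 := by exact_mod_cast hN.ne'
      have h1 : 0 ≤ j % (N : ℤ) := Int.emod_nonneg _ h0
      have h2 : j % (N : ℤ) < N := Int.emod_lt_of_pos _ (by exact_mod_cast hN)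
      omega⟩, -(j / (N : ℤ)))
  left_inv := by
    rintro ⟨k, n⟩
    have h0 : ((N:ℕ) : ℤ) ≠ 0 := by exact_mod_cast hN.ne'
    have hrw : (k : ℤ) - n * N = (k : ℤ) + (-n) * N := by ring
    have hk0 : (0:ℤ) ≤ (k:ℤ) := Int.ofNat_nonneg _
    have hkN : (k : ℤ) < N := by exact_mod_cast k.2
    have e1 : ((k : ℤ) - n * N) % N = (k : ℤ) := by
      rw [hrw, Int.add_mul_emod_self_right, Int.emod_eq_of_lt hk0 hkN]
    have e2 : ((k : ℤ) - n * N) / N = -n := by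
      rw [hrw, Int.add_mul_ediv_right _ _ h0, Int.ediv_eq_zero_of_lt hk0 hkN, zero_add]
    simp only [Prod.mk.injEq]
    constructor
    · apply Fin.ext
      simp [e1]
    · rw [e2, neg_neg]
  right_inv := by
    intro j
    have h0 : ((N:ℕ) : ℤ) ≠ 0 := by exact_mod_cast hN.ne'
    have h1 : 0 ≤ j % (N : ℤ) := Int.emod_nonneg _ h0
    simp only []
    rw [Int.toNat_of_nonneg h1, neg_mul, sub_neg_eq_add, mul_comm, Int.emod_add_mul_ediv]

def bigEquiv (N : ℕ) (hN : 0 < N) : ((Fin N × Fin N) × (ℤ × ℤ)) ≃ (ℤ × ℤ) :=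
  (Equiv.prodProdProdComm (Fin N) (Fin N) ℤ ℤ).trans
    ((finIntEquiv N hN).prodCongr (finIntEquiv N hN))

lemma bigEquiv_apply (N : ℕ) (hN : 0 < N) (κ : Fin N × Fin N) (n : ℤ × ℤ) :
    bigEquiv N hN (κ, n) = ((κ.1 : ℤ) - n.1 * N, (κ.2 : ℤ) - n.2 * N) := rfl

lemma sum_winsum_eq (N : ℕ) (hN : 0 < N) (w : ℤ × ℤ → ℍ) (hw : MemL2 w) :
    ∑ κ : Fin N × Fin N, ∑' n : ℤ × ℤ,
      ‖w ((κ.1 : ℤ) - n.1 * N, (κ.2 : ℤ) - n.2 * N)‖ ^ 2 = normSq2 w := by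
  have hsum : Summable fun q : (Fin N × Fin N) × (ℤ × ℤ) => ‖w (bigEquiv N hN q)‖ ^ 2 :=
    hw.comp_injective (bigEquiv N hN).injective
  calc ∑ κ : Fin N × Fin N, ∑' n : ℤ × ℤ,
        ‖w ((κ.1 : ℤ) - n.1 * N, (κ.2 : ℤ) - n.2 * N)‖ ^ 2
      = ∑' κ : Fin N × Fin N, ∑' n : ℤ × ℤ, ‖w (bigEquiv N hN (κ, n))‖ ^ 2 := by
        rw [tsum_fintype]
        exact Finset.sum_congr rfl fun κ _ => tsum_congr fun n => by rw [bigEquiv_apply]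
    _ = ∑' q : (Fin N × Fin N) × (ℤ × ℤ), ‖w (bigEquiv N hN q)‖ ^ 2 :=
        (Summable.tsum_prod' hsum hsum.prod_factor).symm
    _ = normSq2 w := (bigEquiv N hN).tsum_eq fun j => ‖w j‖ ^ 2

lemma eI_zero : eI 0 = 1 := by
  unfold eI
  ext <;> simp [Quaternion.ext_iff] <;> rfl

lemma eJ_zero : eJ 0 = 1 := by
  unfold eJ
  ext <;> simp [Quaternion.ext_iff] <;> rfl

lemma gaborAtom_zero (M N : ℕ) (w : ℤ × ℤ → ℍ) :
    gaborAtom M N w (0, 0) (0, 0) = w := by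
  funext k
  unfold gaborAtom
  simp [eI_zero, eJ_zero]

lemma coe_sum_H (F : Finset (ℤ × ℤ)) (f : ℤ × ℤ → ℝ) :
    ((∑ k ∈ F, f k : ℝ) : ℍ) = ∑ k ∈ F, ((f k : ℝ) : ℍ) := by
  induction F using Finset.induction with
  | empty => simp
  | insert _ _ h ih => rw [Finset.sum_insert h, Finset.sum_insert h, Quaternion.coe_add, ih]

lemma qpair_trunc (F : Finset (ℤ × ℤ)) (w v : ℤ × ℤ → ℍ) :
    qpair w (fun k => if k ∈ F then v k else 0) = ∑ k ∈ F, star (w k) * v k := by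
  unfold qpair
  rw [tsum_eq_sum (s := F) (fun b hb => by simp [hb])]
  exact Finset.sum_congr rfl fun k hk => by simp [hk]

lemma norm_sq_le_one_of_parseval (L M N : ℕ) (hM : 0 < M) (hN : 0 < N)
    (g : ℕ → ℤ × ℤ → ℍ) (hg : ∀ l < L, MemL2 (g l)) (hpar : IsParseval L M N g)
    (l : ℕ) (hl : l < L) : normSq2 (g l) ≤ 1 := by
  have hgl := hg l hl
  refine Summable.tsum_le_of_sum_le hgl fun F => ?_
  set s : ℝ := ∑ k ∈ F, ‖g l k‖ ^ 2 with hs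
  have hs0 : 0 ≤ s := Finset.sum_nonneg fun k _ => by positivity
  set f : ℤ × ℤ → ℍ := fun k => if k ∈ F then g l k else 0 with hf
  have hfL2 : MemL2 f := by
    apply summable_of_ne_finset_zero (s := F)
    intro b hb
    simp [hf, hb]
  have hnf : normSq2 f = s := by
    unfold normSq2
    rw [tsum_eq_sum (s := F) (fun b hb => by simp [hf, hb])]
    exact Finset.sum_congr rfl fun k hk => by simp [hf, hk]
  -- the special pairing
  have hd : qpair (g l) f = ((s : ℝ) : ℍ) := by
    rw [hf, qpair_trunc, hs, coe_sum_H]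
    refine Finset.sum_congr rfl fun k _ => ?_
    rw [Quaternion.star_mul_self, Quaternion.normSq_eq_norm_mul_self, sq]
  have he : ‖qpair (g l) f‖ ^ 2 = s ^ 2 := by
    rw [hd, Quaternion.norm_coe, Real.norm_eq_abs, abs_of_nonneg hs0]
  -- summability of the l-th layer
  have hSsum : Summable fun n : ℤ × ℤ =>
      ∑ m ∈ msq M, ‖qpair (gaborAtom M N (g l) m n) f‖ ^ 2 := by
    have hB : Summable fun n : ℤ × ℤ =>
        ((M : ℝ) * M) * ((∑ k ∈ F, ‖f k‖ ^ 2) *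
          ∑ k ∈ F, ‖g l (k.1 - n.1 * (N : ℤ), k.2 - n.2 * (N : ℤ))‖ ^ 2) := by
      apply Summable.mul_left
      apply Summable.mul_left
      exact summable_sum fun k _ => summable_shift N hN (g l) hgl k
    refine Summable.of_nonneg_of_le (fun n => Finset.sum_nonneg fun m _ => by positivity)
      (fun n => ?_) hB
    have hm : ∀ m ∈ msq M, ‖qpair (gaborAtom M N (g l) m n) f‖ ^ 2 ≤
        (∑ k ∈ F, ‖f k‖ ^ 2) *
          ∑ k ∈ F, ‖g l (k.1 - n.1 * (N : ℤ), k.2 - n.2 * (N : ℤ))‖ ^ 2 := by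
      intro m _
      have h1 : ‖qpair (gaborAtom M N (g l) m n) f‖ ≤
          ∑ k ∈ F, ‖g l (k.1 - n.1 * (N : ℤ), k.2 - n.2 * (N : ℤ))‖ * ‖f k‖ := by
        rw [hf, qpair_trunc]
        refine (norm_sum_le _ _).trans_eq (Finset.sum_congr rfl fun k hk => ?_)
        rw [norm_mul, norm_star, norm_gaborAtom]
        simp [hf, hk]
      calc ‖qpair (gaborAtom M N (g l) m n) f‖ ^ 2
          ≤ (∑ k ∈ F, ‖g l (k.1 - n.1 * (N : ℤ), k.2 - n.2 * (N : ℤ))‖ * ‖f k‖) ^ 2 := by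
            apply pow_le_pow_left₀ (norm_nonneg _) h1
        _ ≤ (∑ k ∈ F, ‖g l (k.1 - n.1 * (N : ℤ), k.2 - n.2 * (N : ℤ))‖ ^ 2) *
            ∑ k ∈ F, ‖f k‖ ^ 2 := Finset.sum_mul_sq_le_sq_mul_sq F _ _
        _ = (∑ k ∈ F, ‖f k‖ ^ 2) *
            ∑ k ∈ F, ‖g l (k.1 - n.1 * (N : ℤ), k.2 - n.2 * (N : ℤ))‖ ^ 2 := mul_comm _ _
    calc ∑ m ∈ msq M, ‖qpair (gaborAtom M N (g l) m n) f‖ ^ 2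
        ≤ ∑ _m ∈ msq M, (∑ k ∈ F, ‖f k‖ ^ 2) *
            ∑ k ∈ F, ‖g l (k.1 - n.1 * (N : ℤ), k.2 - n.2 * (N : ℤ))‖ ^ 2 :=
          Finset.sum_le_sum hm
      _ = ((M : ℝ) * M) * ((∑ k ∈ F, ‖f k‖ ^ 2) *
            ∑ k ∈ F, ‖g l (k.1 - n.1 * (N : ℤ), k.2 - n.2 * (N : ℤ))‖ ^ 2) := by
          rw [Finset.sum_const]
          simp [msq]
  -- the single term bound
  have hm00 : ((0, 0) : ℕ × ℕ) ∈ msq M := by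
    simp [msq, Finset.mem_product, hM]
  have hS00 : s ^ 2 ≤ ∑ m ∈ msq M, ‖qpair (gaborAtom M N (g l) m ((0:ℤ), (0:ℤ))) f‖ ^ 2 := by
    have h1 : s ^ 2 = ‖qpair (gaborAtom M N (g l) ((0, 0) : ℕ × ℕ) ((0:ℤ), (0:ℤ))) f‖ ^ 2 := by
      rw [gaborAtom_zero, he]
    rw [h1]
    exact Finset.single_le_sum
      (f := fun m => ‖qpair (gaborAtom M N (g l) m ((0:ℤ), (0:ℤ))) f‖ ^ 2)
      (fun m _ => by positivity) hm00
  have hTl : ∑ m ∈ msq M, ‖qpair (gaborAtom M N (g l) m ((0:ℤ), (0:ℤ))) f‖ ^ 2 ≤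
      ∑' n : ℤ × ℤ, ∑ m ∈ msq M, ‖qpair (gaborAtom M N (g l) m n) f‖ ^ 2 :=
    Summable.le_tsum hSsum ((0:ℤ), (0:ℤ)) fun n _ => Finset.sum_nonneg fun m _ => by positivity
  have hfr : ∑' n : ℤ × ℤ, ∑ m ∈ msq M, ‖qpair (gaborAtom M N (g l) m n) f‖ ^ 2 ≤
      frameSum L M N g f := by
    unfold frameSum
    exact Finset.single_le_sum
      (f := fun l' => ∑' n : ℤ × ℤ, ∑ m ∈ msq M, ‖qpair (gaborAtom M N (g l') m n) f‖ ^ 2)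
      (fun l' _ => tsum_nonneg fun n => Finset.sum_nonneg fun m _ => by positivity)
      (Finset.mem_range.2 hl)
  have key : s ^ 2 ≤ s := by
    have := hpar f hfL2
    rw [hnf] at this
    linarith [hS00.trans (hTl.trans hfr)]
  nlinarith

/-- a Parseval quaternionic Gabor frame forces `N² ≤ L M²`. -/
theorem stmt_1 (L M N : ℕ) (hL : 0 < L) (hM : 0 < M) (hN : 0 < N)
    (g : ℕ → ℤ × ℤ → ℍ) (hg : ∀ l < L, MemL2 (g l))
    (hpar : IsParseval L M N g) :
    N ^ 2 ≤ L * M ^ 2 := by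

  have key : ∀ κ : ℤ × ℤ, ((M : ℝ) * M) * ∑ l ∈ Finset.range L, ∑' n : ℤ × ℤ,
      ‖g l (κ.1 - n.1 * (N : ℤ), κ.2 - n.2 * (N : ℤ))‖ ^ 2 = 1 := by
    intro κ
    rw [← frameSum_qdelta, hpar _ (memL2_qdelta κ), normSq2_qdelta]
  have h2 : ((N : ℝ) * N) = ((M : ℝ) * M) * ∑ l ∈ Finset.range L, normSq2 (g l) := by
    calc ((N : ℝ) * N) = ∑ _κ : Fin N × Fin N, (1 : ℝ) := by
          simp [Fintype.card_prod]
      _ = ∑ κ : Fin N × Fin N, ((M : ℝ) * M) * ∑ l ∈ Finset.range L, ∑' n : ℤ × ℤ,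
            ‖g l ((κ.1 : ℤ) - n.1 * (N : ℤ), (κ.2 : ℤ) - n.2 * (N : ℤ))‖ ^ 2 :=
          Finset.sum_congr rfl fun κ _ => (key ((κ.1 : ℤ), (κ.2 : ℤ))).symm
      _ = ((M : ℝ) * M) * ∑ κ : Fin N × Fin N, ∑ l ∈ Finset.range L, ∑' n : ℤ × ℤ,
            ‖g l ((κ.1 : ℤ) - n.1 * (N : ℤ), (κ.2 : ℤ) - n.2 * (N : ℤ))‖ ^ 2 := by
          rw [← Finset.mul_sum]
      _ = ((M : ℝ) * M) * ∑ l ∈ Finset.range L, ∑ κ : Fin N × Fin N, ∑' n : ℤ × ℤ,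
            ‖g l ((κ.1 : ℤ) - n.1 * (N : ℤ), (κ.2 : ℤ) - n.2 * (N : ℤ))‖ ^ 2 := by
          rw [Finset.sum_comm]
      _ = ((M : ℝ) * M) * ∑ l ∈ Finset.range L, normSq2 (g l) := by
          congr 1
          exact Finset.sum_congr rfl fun l hl =>
            sum_winsum_eq N hN (g l) (hg l (Finset.mem_range.1 hl))
  have h3 : ∑ l ∈ Finset.range L, normSq2 (g l) ≤ (L : ℝ) := by
    calc ∑ l ∈ Finset.range L, normSq2 (g l) ≤ ∑ _l ∈ Finset.range L, (1 : ℝ) :=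
          Finset.sum_le_sum fun l hl =>
            norm_sq_le_one_of_parseval L M N hM hN g hg hpar l (Finset.mem_range.1 hl)
      _ = (L : ℝ) := by simp
  have h4 : ((N : ℝ)) ^ 2 ≤ (L : ℝ) * (M : ℝ) ^ 2 := by nlinarith [h2, h3, sq_nonneg ((M:ℝ))]
  exact_mod_cast h4
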